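/- Let p be a prime, α a positive integer, and G a finite abelian p-group of order p^α with rank at least 2. If G = MS is a complete splitting (M ⊆ ℤ, S ⊆ G, every element of G having a unique representation m·s), then |M| = 1. -/

import Mathlib

open Finset

/-- In a noncyclic abelian `p`-group containing an element of order `p^c` (`c ≥ 1`),
if the `p^c`-torsion has at most `p^c` elements we derive cyclicity (contradiction). -/
private lemma aux_cyclic {G : Type*} [AddCommGroup G] [Fintype G] [DecidableEq G]
    (p : ℕ) (hp : p.Prime) (α : ℕ)
    (hcard : Fintype.card G = p ^ α)
    (s₀ : G) (c : ℕ) (hc1 : 1 ≤ c) (hc : addOrderOf s₀ = p ^ c)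
    (hker : ∀ x : G, p ^ c • x = 0 → x ∈ AddSubgroup.zmultiples s₀) :
    IsAddCyclic G := by
  classical
  -- the element y of order p
  set y : G := (p ^ (c - 1)) • s₀ with hy
  have hpc1 : (p : ℕ) ^ (c - 1) ≠ 0 := pow_ne_zero _ hp.pos.ne'
  have hoy : addOrderOf y = p := by
    rw [hy, addOrderOf_nsmul' s₀ hpc1, hc]
    have hgcd : (p ^ c).gcd (p ^ (c - 1)) = p ^ (c - 1) :=
      Nat.gcd_eq_right (pow_dvd_pow p (Nat.sub_le c 1))
    rw [hgcd]
    have : p ^ c = p ^ (c - 1) * p := by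
      rw [← pow_succ, Nat.sub_add_cancel hc1]
    rw [this, Nat.mul_div_cancel_left _ (Nat.pos_of_ne_zero hpc1)]
  -- p-torsion is contained in the multiples of y
  have hAp : ∀ x : G, p • x = 0 → x ∈ AddSubgroup.zmultiples y := by
    intro x hx
    have hxker : p ^ c • x = 0 := by
      have : p ^ c = p ^ (c - 1) * p := by
        rw [← pow_succ, Nat.sub_add_cancel hc1]
      rw [this, mul_smul, hx, smul_zero]
    obtain ⟨k, hk⟩ := hker x hxker
    have hk2 : k • s₀ = x := hk
    -- k • s₀ = x, and p • x = 0 forces p^(c-1) ∣ k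
    have hpk : ((p : ℤ) * k) • s₀ = 0 := by
      rw [mul_smul, hk2, natCast_zsmul]
      exact hx
    have hdvd : ((p : ℤ) ^ c) ∣ (p : ℤ) * k := by
      have := addOrderOf_dvd_iff_zsmul_eq_zero.2 hpk
      rwa [hc, Nat.cast_pow] at this
    have hdvd' : ((p : ℤ) ^ (c - 1)) ∣ k := by
      have hsplit : (p : ℤ) ^ c = (p : ℤ) * (p : ℤ) ^ (c - 1) := by
        conv_lhs => rw [show c = (c - 1) + 1 by omega]
        ring
      rw [hsplit] at hdvd
      have hp0 : (p : ℤ) ≠ 0 := by exact_mod_cast hp.pos.ne'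
      exact (mul_dvd_mul_iff_left hp0).1 hdvd
    obtain ⟨k', hk'⟩ := hdvd'
    refine ⟨k', ?_⟩
    show k' • y = x
    have hx' : x = ((p : ℤ) ^ (c - 1) * k') • s₀ := by rw [← hk', hk2]
    rw [hx', mul_comm, mul_smul, hy, ← Nat.cast_pow, natCast_zsmul]
  -- cardinality of p-torsion is at most p
  have hcardAp : #(filter (fun x : G => p • x = 0) univ) ≤ p := by
    calc #(filter (fun x : G => p • x = 0) univ)
        ≤ (AddSubgroup.zmultiples y : Set G).toFinset.card := by
          apply Finset.card_le_card
          intro x hx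
          rw [Set.mem_toFinset]
          exact hAp x (by simpa using hx)
      _ = Fintype.card (AddSubgroup.zmultiples y) := Set.toFinset_card _
      _ = p := by rw [Fintype.card_zmultiples, hoy]
  -- p^j-torsion has at most p^j elements, by induction
  have hpow : ∀ j : ℕ, #(filter (fun x : G => p ^ j • x = 0) univ) ≤ p ^ j := by
    intro j
    induction j with
    | zero =>
      simp only [pow_zero, one_smul]
      calc #(filter (fun x : G => x = 0) univ) ≤ #({0} : Finset G) := by
            apply Finset.card_le_card; intro x hx; simp at hx; simp [hx]
        _ = 1 := Finset.card_singleton _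
    | succ j ih =>
      set s : Finset G := filter (fun x : G => p ^ (j + 1) • x = 0) univ with hs
      have hstep : #s ≤ p * #(s.image (fun x => p • x)) := by
        apply Finset.card_le_mul_card_image
        intro b hb
        obtain ⟨x₁, hx₁s, hx₁⟩ := Finset.mem_image.1 hb
        calc #(filter (fun x => p • x = b) s)
            ≤ #(filter (fun x : G => p • x = 0) univ) := by
              apply Finset.card_le_card_of_injOn (fun x => x - x₁)
              · intro x hx
                simp only [Finset.mem_coe, Finset.mem_filter] at hx ⊢
                refine ⟨Finset.mem_univ _, ?_⟩
                rw [smul_sub, hx.2, hx₁, sub_self]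
              · intro a _ b' _ hab
                exact sub_left_injective hab
          _ ≤ p := hcardAp
      have himage : s.image (fun x => p • x) ⊆ filter (fun x : G => p ^ j • x = 0) univ := by
        intro b hb
        obtain ⟨x₁, hx₁s, hx₁⟩ := Finset.mem_image.1 hb
        simp only [Finset.mem_filter, hs] at hx₁s ⊢
        refine ⟨Finset.mem_univ _, ?_⟩
        rw [← hx₁, ← mul_smul, ← pow_succ, hx₁s.2]
      calc #s ≤ p * #(s.image (fun x => p • x)) := hstep
        _ ≤ p * p ^ j := by
            exact Nat.mul_le_mul_left p (le_trans (Finset.card_le_card himage) ih)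
        _ = p ^ (j + 1) := (pow_succ' p j).symm
  -- conclude cyclicity
  apply isAddCyclic_of_card_nsmul_eq_zero_le
  intro n hn0
  have hsub : filter (fun x : G => n • x = 0) univ ⊆
      filter (fun x : G => p ^ (n.factorization p) • x = 0) univ := by
    intro x hx
    simp only [Finset.mem_filter] at hx ⊢
    refine ⟨Finset.mem_univ _, ?_⟩
    have h1 : addOrderOf x ∣ n := addOrderOf_dvd_iff_nsmul_eq_zero.2 hx.2
    have h2 : addOrderOf x ∣ p ^ α := hcard ▸ addOrderOf_dvd_card
    obtain ⟨t, _, ht⟩ := (Nat.dvd_prime_pow hp).1 h2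
    have htle : t ≤ n.factorization p := by
      rw [← hp.pow_dvd_iff_le_factorization hn0.ne']
      rw [← ht]; exact h1
    apply addOrderOf_dvd_iff_nsmul_eq_zero.1
    rw [ht]
    exact pow_dvd_pow p htle
  calc #(filter (fun x : G => n • x = 0) univ)
      ≤ p ^ (n.factorization p) := le_trans (Finset.card_le_card hsub) (hpow _)
    _ ≤ n := Nat.le_of_dvd hn0 (Nat.ordProj_dvd n p)

theorem stmt_4 {G : Type*} [AddCommGroup G] [Fintype G]
    (p : ℕ) (hp : p.Prime) (α : ℕ) (hα : 0 < α)
    (hcard : Fintype.card G = p ^ α)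
    (hrank : ¬ IsAddCyclic G)
    (M : Finset ℤ) (S : Finset G)
    (hCS : ∀ x : G, ∃! q : ℤ × G, q.1 ∈ M ∧ q.2 ∈ S ∧ q.1 • q.2 = x) :
    M.card = 1 := by
  classical
  -- the representation map is a bijection, so |M| * |S| = |G|
  have hprod : M.card * S.card = p ^ α := by
    rw [← Finset.card_product, ← hcard, ← Finset.card_univ]
    apply Finset.card_bij (fun (q : ℤ × G) _ => q.1 • q.2)
    · intro q _; exact Finset.mem_univ _
    · rintro ⟨m1, s1⟩ h1 ⟨m2, s2⟩ h2 heq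
      rw [Finset.mem_product] at h1 h2
      exact (hCS (m1 • s1)).unique ⟨h1.1, h1.2, rfl⟩ ⟨h2.1, h2.2, heq.symm⟩
    · intro x _
      obtain ⟨q, ⟨hm, hs, hx⟩, _⟩ := hCS x
      exact ⟨q, Finset.mem_product.2 ⟨hm, hs⟩, hx⟩
  have hMpos : 0 < M.card := by
    obtain ⟨q, ⟨hm, _, _⟩, _⟩ := hCS 0
    exact Finset.card_pos.2 ⟨q.1, hm⟩
  by_cases h0S : (0 : G) ∈ S
  · -- if 0 ∈ S, then all elements of M give the same representation of 0
    have hle : M.card ≤ 1 := by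
      apply Finset.card_le_one.2
      intro a ha b hb
      have := (hCS 0).unique (y₁ := (a, (0 : G))) (y₂ := (b, (0 : G)))
        ⟨ha, h0S, smul_zero a⟩ ⟨hb, h0S, smul_zero b⟩
      exact congrArg Prod.fst this
    omega
  · -- otherwise derive a contradiction with noncyclicity
    exfalso
    obtain ⟨⟨m₀, s₀⟩, ⟨hm₀, hs₀, hms₀⟩, _⟩ := hCS 0
    have hs₀ne : s₀ ≠ 0 := fun h => h0S (h ▸ hs₀)
    have hdvd : addOrderOf s₀ ∣ p ^ α := hcard ▸ addOrderOf_dvd_card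
    obtain ⟨c, hcα, hc⟩ := (Nat.dvd_prime_pow hp).1 hdvd
    have hc1 : 1 ≤ c := by
      rcases Nat.eq_zero_or_pos c with h | h
      · exfalso
        rw [h, pow_zero] at hc
        exact hs₀ne (AddMonoid.addOrderOf_eq_one_iff.1 hc)
      · exact h
    -- p^c divides m₀
    have hm₀dvd : ((p : ℤ) ^ c) ∣ m₀ := by
      have := addOrderOf_dvd_iff_zsmul_eq_zero.2 (hms₀ : m₀ • s₀ = 0)
      rwa [hc, Nat.cast_pow] at this
    -- the multiplication-by-p^c homomorphism
    set f : G →+ G := AddMonoidHom.mk' (fun x => p ^ c • x) (fun a b => smul_add _ a b) with hf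
    -- |M| ≤ p^c  (m ↦ m • s₀ is injective into ⟨s₀⟩)
    have hMcard : M.card ≤ p ^ c := by
      have key : M.card ≤ Fintype.card (AddSubgroup.zmultiples s₀) := by
        rw [← Fintype.card_coe M]
        apply Fintype.card_le_of_injective (fun m : {x // x ∈ M} =>
          (⟨(m : ℤ) • s₀, AddSubgroup.zsmul_mem _ (AddSubgroup.mem_zmultiples s₀) _⟩ :
            AddSubgroup.zmultiples s₀))
        intro a b hab
        have h' : (a : ℤ) • s₀ = (b : ℤ) • s₀ := Subtype.ext_iff.1 hab
        have := (hCS ((a : ℤ) • s₀)).unique (y₁ := ((a : ℤ), s₀)) (y₂ := ((b : ℤ), s₀))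
          ⟨a.2, hs₀, rfl⟩ ⟨b.2, hs₀, h'.symm⟩
        exact Subtype.ext (congrArg Prod.fst this)
      rwa [Fintype.card_zmultiples, hc] at key
    -- |S| ≤ |range f|  (s ↦ m₀ • s is injective into range f)
    have hScard : S.card ≤ Nat.card f.range := by
      rw [Nat.card_eq_fintype_card, ← Fintype.card_coe S]
      obtain ⟨u, hu⟩ := hm₀dvd
      apply Fintype.card_le_of_injective (fun s : {x // x ∈ S} =>
        (⟨m₀ • (s : G), ⟨u • (s : G), by
          show p ^ c • (u • (s : G)) = m₀ • (s : G)
          rw [hu, mul_smul, ← Nat.cast_pow, natCast_zsmul]⟩⟩ : f.range))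
      intro a b hab
      have h' : m₀ • (a : G) = m₀ • (b : G) := Subtype.ext_iff.1 hab
      have := (hCS (m₀ • (a : G))).unique (y₁ := (m₀, (a : G))) (y₂ := (m₀, (b : G)))
        ⟨hm₀, a.2, rfl⟩ ⟨hm₀, b.2, h'.symm⟩
      exact Subtype.ext (congrArg Prod.snd this)
    -- |G| = |range f| * |ker f|
    have hsplit : p ^ α = Nat.card f.range * Nat.card f.ker := by
      rw [← hcard, ← Nat.card_eq_fintype_card,
        AddSubgroup.card_eq_card_quotient_mul_card_addSubgroup f.ker]
      congr 1
      exact Nat.card_congr (QuotientAddGroup.quotientKerEquivRange f).toEquiv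
    -- |ker f| ≥ p^(c+1), else G would be cyclic
    have hK : p ^ (c + 1) ≤ Nat.card f.ker := by
      by_contra hlt
      push_neg at hlt
      -- zmultiples s₀ ≤ ker f
      have hsub : AddSubgroup.zmultiples s₀ ≤ f.ker := by
        intro x hx
        obtain ⟨k, hk⟩ := hx
        have hk2 : k • s₀ = x := hk
        rw [AddMonoidHom.mem_ker]
        show p ^ c • x = 0
        rw [← hk2, smul_comm]
        have : (p ^ c) • s₀ = 0 := addOrderOf_dvd_iff_nsmul_eq_zero.1 (hc ▸ dvd_rfl)
        rw [this, smul_zero]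
      have hgekc : p ^ c ≤ Nat.card f.ker := by
        have := AddSubgroup.card_le_of_le hsub
        rwa [Nat.card_zmultiples, hc] at this
      -- ker f has p-power order, hence |ker f| = p^c and ker f = zmultiples s₀
      have hkdvd : Nat.card f.ker ∣ p ^ α := by
        have := AddSubgroup.card_addSubgroup_dvd_card f.ker
        rwa [Nat.card_eq_fintype_card (α := G), hcard] at this
      obtain ⟨t, _, ht⟩ := (Nat.dvd_prime_pow hp).1 hkdvd
      have htc : t = c := by
        rw [ht] at hgekc hlt
        have h1 : c ≤ t := (Nat.pow_le_pow_iff_right hp.one_lt).1 hgekc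
        have h2 : t < c + 1 := (Nat.pow_lt_pow_iff_right hp.one_lt).1 hlt
        omega
      have hkeq : AddSubgroup.zmultiples s₀ = f.ker := by
        apply AddSubgroup.eq_of_le_of_card_ge hsub
        rw [ht, htc, Nat.card_zmultiples, hc]
      -- apply the auxiliary cyclicity lemma
      apply hrank
      apply aux_cyclic p hp α hcard s₀ c hc1 hc
      intro x hx
      rw [hkeq]
      rw [AddMonoidHom.mem_ker]
      exact hx
    -- final arithmetic contradiction
    have hRpos : 0 < Nat.card f.range := by
      rcases Nat.eq_zero_or_pos (Nat.card f.range) with h | h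
      · exfalso
        rw [h, zero_mul] at hsplit
        exact (pow_pos hp.pos α).ne' hsplit
      · exact h
    have h1 : p ^ α ≤ p ^ c * Nat.card f.range :=
      hprod ▸ Nat.mul_le_mul hMcard hScard
    have h2 : Nat.card f.range * p ^ (c + 1) ≤ p ^ α := by
      rw [hsplit]
      exact Nat.mul_le_mul_left _ hK
    have h3 : Nat.card f.range * p ^ (c + 1) ≤ p ^ c * Nat.card f.range :=
      le_trans h2 h1
    rw [mul_comm (p ^ c) _] at h3
    have h4 : p ^ (c + 1) ≤ p ^ c := Nat.le_of_mul_le_mul_left h3 hRpos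
    have h5 : p ^ c < p ^ (c + 1) := Nat.pow_lt_pow_right hp.one_lt (Nat.lt_succ_self c)
    omega
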